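/- Smoothing property of the linearizing operator: for every tuple φ of essentially bounded measurable functions there is a constant C (depending on N, the bounds a, b on K and on max_i ‖φ_i‖_{L^∞}) such that for every h = (h_1,…,h_N) with h_i ∈ L²(X_i,m_i), each L_{φ,i}(h) is essentially bounded with ‖L_{φ,i}(h)‖_{L^∞(m_i)} ≤ C Σ_{j≠i} ‖h_j‖_{L²(m_j)}. -/

import Mathlib

open MeasureTheory Filter
open scoped ENNReal

noncomputable section

/-- The density kernel `γ_φ(x) = K(x) exp(∑_j φ_j(x_j))`. -/
def gammaFn {N : ℕ} {X : Fin N → Type*} (K : (∀ i, X i) → ℝ) (φ : ∀ i, X i → ℝ)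
    (x : ∀ i, X i) : ℝ :=
  K x * Real.exp (∑ j, φ j (x j))

/-- `T_i(φ)(x_i) = ∫_{X_{-i}} K(x_i, x_{-i}) exp(∑_j φ_j(x_j)) dm_{-i}(x_{-i})`.
Since every `m j` is a probability measure, integrating over the full product
(with the `i`-th coordinate replaced by `x_i` via `Function.update`) agrees with
integrating over `∏_{j ≠ i} X_j`. -/
def schrT {N : ℕ} {X : Fin N → Type*} [∀ i, MeasurableSpace (X i)]
    (m : ∀ i, Measure (X i)) (K : (∀ i, X i) → ℝ) (φ : ∀ i, X i → ℝ)
    (i : Fin N) (xi : X i) : ℝ :=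
  ∫ y, gammaFn K φ (Function.update y i xi) ∂Measure.pi m

/-- `L_{φ,i}(h)(x_i)`, the conditional-expectation type operator obtained by
linearizing the Schrödinger system. -/
def schrL {N : ℕ} {X : Fin N → Type*} [∀ i, MeasurableSpace (X i)]
    (m : ∀ i, Measure (X i)) (K : (∀ i, X i) → ℝ) (φ h : ∀ i, X i → ℝ)
    (i : Fin N) (xi : X i) : ℝ :=
  (∫ y, gammaFn K φ (Function.update y i xi) *
      ∑ j ∈ Finset.univ.erase i, h j (Function.update y i xi j) ∂Measure.pi m) /
  (∫ y, gammaFn K φ (Function.update y i xi) ∂Measure.pi m)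

/-- A tuple of essentially bounded measurable functions. -/
def BddTuple {N : ℕ} {X : Fin N → Type*} [∀ i, MeasurableSpace (X i)]
    (m : ∀ i, Measure (X i)) (φ : ∀ i, X i → ℝ) : Prop :=
  ∀ i, Measurable (φ i) ∧ MemLp (φ i) ⊤ (m i)

/-- Membership in `E`: essentially bounded measurable tuples with
`∫ φ_i dm_i = 0` for `i = 1, …, N-1` (i.e. all but the last index). -/
def InE {N : ℕ} {X : Fin N → Type*} [∀ i, MeasurableSpace (X i)]
    (m : ∀ i, Measure (X i)) (φ : ∀ i, X i → ℝ) : Prop :=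
  BddTuple m φ ∧ ∀ i : Fin N, (i : ℕ) < N - 1 → ∫ x, φ i x ∂m i = 0

/-- Membership in `F`: essentially bounded measurable tuples whose integrals all coincide. -/
def InF {N : ℕ} {X : Fin N → Type*} [∀ i, MeasurableSpace (X i)]
    (m : ∀ i, Measure (X i)) (μ : ∀ i, X i → ℝ) : Prop :=
  BddTuple m μ ∧ ∀ i j, ∫ x, μ i x ∂m i = ∫ x, μ j x ∂m j

/-- Membership in `F_{++}`: members of `F` which are bounded away from `0`. -/
def InFpp {N : ℕ} {X : Fin N → Type*} [∀ i, MeasurableSpace (X i)]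
    (m : ∀ i, Measure (X i)) (μ : ∀ i, X i → ℝ) : Prop :=
  InF m μ ∧ ∀ i, ∃ c : ℝ, 0 < c ∧ ∀ᵐ x ∂m i, c ≤ μ i x

/-- Membership in `F_{++,M}`: members of `F_{++}` with `1/M ≤ μ_i ≤ M` a.e. -/
def InFppM {N : ℕ} {X : Fin N → Type*} [∀ i, MeasurableSpace (X i)]
    (m : ∀ i, Measure (X i)) (M : ℝ) (μ : ∀ i, X i → ℝ) : Prop :=
  InFpp m μ ∧ ∀ i, ∀ᵐ x ∂m i, 1 / M ≤ μ i x ∧ μ i x ≤ M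

end

section Aux

open MeasureTheory Measure

variable {N : ℕ} {X : Fin N → Type*} [∀ i, MeasurableSpace (X i)]
    (m : ∀ i, MeasureTheory.Measure (X i)) [∀ i, MeasureTheory.IsProbabilityMeasure (m i)]

/-- Coordinate evaluation is measure preserving from the product of probability measures. -/
lemma measurePreserving_eval' (j : Fin N) :
    MeasurePreserving (fun y : ∀ i, X i => y j) (Measure.pi m) (m j) := by
  refine ⟨measurable_pi_apply j, ?_⟩
  refine Measure.ext fun s hs => ?_
  rw [Measure.map_apply (measurable_pi_apply j) hs]
  have : (fun y : ∀ i, X i => y j) ⁻¹' s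
      = Set.pi Set.univ (Function.update (fun i : Fin N => (Set.univ : Set (X i))) j s) :=
    (Set.univ_pi_update_univ j s).symm
  rw [this, Measure.pi_pi]
  rw [Finset.prod_eq_single_of_mem j (Finset.mem_univ j)
    (fun b _ hb => by rw [Function.update_of_ne hb]; exact measure_univ)]
  rw [Function.update_self]

/-- Updating the `i`-th coordinate is measure preserving
from `(m i) × (Measure.pi m)` to `Measure.pi m`. -/
lemma measurePreserving_update' (i : Fin N) :
    MeasurePreserving (fun p : X i × (∀ j, X j) => Function.update p.2 i p.1)
      ((m i).prod (Measure.pi m)) (Measure.pi m) := by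
  have hmeas : Measurable fun p : X i × (∀ j, X j) => Function.update p.2 i p.1 := by
    refine measurable_pi_iff.2 fun j => ?_
    rcases eq_or_ne j i with rfl | hj
    · simpa only [Function.update_self] using measurable_fst
    · simp only [Function.update_of_ne hj]
      exact (measurable_pi_apply j).comp measurable_snd
  refine ⟨hmeas, ?_⟩
  refine (Measure.pi_eq fun s hs => ?_).symm
  rw [Measure.map_apply hmeas (MeasurableSet.univ_pi hs)]
  have hpre : (fun p : X i × (∀ j, X j) => Function.update p.2 i p.1) ⁻¹' Set.pi Set.univ s
      = (s i) ×ˢ (Set.pi Set.univ (Function.update s i Set.univ)) := by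
    ext ⟨z, y⟩
    simp only [Set.mem_preimage, Set.mem_univ_pi, Set.mem_prod]
    constructor
    · intro hp
      refine ⟨by simpa using hp i, fun j => ?_⟩
      rcases eq_or_ne j i with rfl | hj
      · simp
      · simpa [Function.update_of_ne hj] using hp j
    · rintro ⟨h1, h2⟩ j
      rcases eq_or_ne j i with rfl | hj
      · simpa using h1
      · simpa [Function.update_of_ne hj] using h2 j
  rw [hpre, Measure.prod_prod, Measure.pi_pi]
  rw [← Finset.mul_prod_erase Finset.univ
      (fun j => m j (Function.update s i Set.univ j)) (Finset.mem_univ i),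
    ← Finset.mul_prod_erase Finset.univ (fun j => m j (s j)) (Finset.mem_univ i)]
  simp only [Function.update_self, measure_univ, one_mul]
  exact congrArg (fun t => (m i) (s i) * t)
    (Finset.prod_congr rfl fun j hj => by
      rw [Function.update_of_ne (Finset.ne_of_mem_erase hj)])

/-- Transfer of a.e. statements along coordinate update. -/
lemma ae_ae_update {P : (∀ j, X j) → Prop} (i : Fin N)
    (hP : ∀ᵐ x ∂Measure.pi m, P x) :
    ∀ᵐ xi ∂m i, ∀ᵐ y ∂Measure.pi m, P (Function.update y i xi) := by
  have h1 : ∀ᵐ p ∂(m i).prod (Measure.pi m), P (Function.update p.2 i p.1) :=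
    (measurePreserving_update' m i).quasiMeasurePreserving.tendsto_ae.eventually hP
  exact Measure.ae_ae_of_ae_prod h1

/-- Cauchy–Schwarz: `∫ |f| ≤ √(∫ f²)` on a probability space. -/
lemma integral_abs_le_sqrt_integral_sq {α : Type*} [MeasurableSpace α] (μ : Measure α)
    [IsProbabilityMeasure μ] (f : α → ℝ) (hf : MemLp f 2 μ) :
    ∫ x, |f x| ∂μ ≤ Real.sqrt (∫ x, f x ^ 2 ∂μ) := by
  have hpq : Real.HolderConjugate 2 2 := ⟨by norm_num, by norm_num, by norm_num⟩
  have h2 : (ENNReal.ofReal (2 : ℝ)) = 2 := by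
    rw [ENNReal.ofReal_ofNat]
  have habs : MemLp (fun x => |f x|) (ENNReal.ofReal (2 : ℝ)) μ := by
    rw [h2]; simpa [Real.norm_eq_abs] using hf.norm
  have hone : MemLp (fun _ : α => (1 : ℝ)) (ENNReal.ofReal (2 : ℝ)) μ := memLp_const 1
  have := integral_mul_le_Lp_mul_Lq_of_nonneg hpq
    (f := fun x => |f x|) (g := fun _ => (1 : ℝ))
    (Filter.Eventually.of_forall fun x => abs_nonneg _)
    (Filter.Eventually.of_forall fun _ => zero_le_one) habs hone
  have e1 : ∫ x, |f x| * 1 ∂μ = ∫ x, |f x| ∂μ := by simp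
  have e2 : ∫ x, |f x| ^ (2 : ℝ) ∂μ = ∫ x, f x ^ 2 ∂μ := by
    refine integral_congr_ae (Filter.Eventually.of_forall fun x => ?_)
    show |f x| ^ (2 : ℝ) = f x ^ 2
    rw [show ((2 : ℝ)) = ((2 : ℕ) : ℝ) by norm_num, Real.rpow_natCast, sq_abs]
  have e3 : ∫ x, (1 : ℝ) ^ (2 : ℝ) ∂μ = 1 := by simp
  rw [e1, e2, e3] at this
  rw [Real.one_rpow, mul_one] at this
  calc ∫ x, |f x| ∂μ ≤ (∫ x, f x ^ 2 ∂μ) ^ ((1 : ℝ) / 2) := this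
    _ = Real.sqrt (∫ x, f x ^ 2 ∂μ) := (Real.sqrt_eq_rpow _).symm

end Aux

/-- Smoothing property of the linearizing operator: `L_{φ,i}`
maps `L²` tuples into `L^∞` with `‖L_{φ,i}(h)‖_{L^∞} ≤ C ∑_{j ≠ i} ‖h_j‖_{L²}`. -/
theorem schrL_smoothing
    {N : ℕ} (hN : 2 ≤ N) {X : Fin N → Type*} [∀ i, MeasurableSpace (X i)]
    (m : ∀ i, MeasureTheory.Measure (X i)) [∀ i, MeasureTheory.IsProbabilityMeasure (m i)]
    (K : (∀ i, X i) → ℝ) (a b : ℝ) (ha : 0 < a) (hab : a ≤ b)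
    (hK : Measurable K) (hKb : ∀ᵐ x ∂MeasureTheory.Measure.pi m, a ≤ K x ∧ K x ≤ b)
    (φ : ∀ i, X i → ℝ) (hφ : BddTuple m φ) :
    ∃ C : ℝ, ∀ h : ∀ i, X i → ℝ, (∀ i, Measurable (h i)) → (∀ i, MemLp (h i) 2 (m i)) →
      ∀ i, ∀ᵐ xi ∂m i,
        |schrL m K φ h i xi| ≤
          C * ∑ j ∈ Finset.univ.erase i, Real.sqrt (∫ x, h j x ^ 2 ∂m j) := by
  classical
  -- essential sup bounds for the φ's
  set R : Fin N → ℝ := fun j => (eLpNormEssSup (φ j) (m j)).toReal with hR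
  have hRae : ∀ j, ∀ᵐ x ∂m j, |φ j x| ≤ R j := by
    intro j
    have hfin : eLpNormEssSup (φ j) (m j) ≠ ⊤ := by
      have := (hφ j).2.2
      rwa [eLpNorm_exponent_top, lt_top_iff_ne_top] at this
    filter_upwards [enorm_ae_le_eLpNormEssSup (φ j) (m j)] with x hx
    have : (‖φ j x‖ₑ).toReal ≤ (eLpNormEssSup (φ j) (m j)).toReal :=
      ENNReal.toReal_mono hfin hx
    simpa [Real.norm_eq_abs] using this
  set S : ℝ := ∑ j, R j with hS
  set A : ℝ := a * Real.exp (-S) with hA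
  set B : ℝ := b * Real.exp S with hB
  have hApos : 0 < A := mul_pos ha (Real.exp_pos _)
  have hBpos : 0 < B := mul_pos (lt_of_lt_of_le ha hab) (Real.exp_pos _)
  refine ⟨B / A, ?_⟩
  intro h hhm hh2 i
  -- global a.e. statement on the product
  have hφ' : ∀ᵐ x ∂Measure.pi m, ∀ j, |φ j (x j)| ≤ R j := by
    rw [ae_all_iff]
    intro j
    exact Measure.tendsto_eval_ae_ae.eventually (hRae j)
  have hQ : ∀ᵐ x ∂Measure.pi m, (a ≤ K x ∧ K x ≤ b) ∧ ∀ j, |φ j (x j)| ≤ R j := hKb.and hφ'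
  have hC := ae_ae_update m i hQ
  filter_upwards [hC] with xi Hxi
  -- notation
  set g : (∀ j, X j) → ℝ := fun y => gammaFn K φ (Function.update y i xi) with hg
  set F : (∀ j, X j) → ℝ := fun y => ∑ j ∈ Finset.univ.erase i, h j (y j) with hF
  -- a.e. bounds on g
  have hgb : ∀ᵐ y ∂Measure.pi m, A ≤ g y ∧ g y ≤ B := by
    filter_upwards [Hxi] with y hy
    have hsum : |∑ j, φ j (Function.update y i xi j)| ≤ S := by
      calc |∑ j, φ j (Function.update y i xi j)|
          ≤ ∑ j, |φ j (Function.update y i xi j)| := Finset.abs_sum_le_sum_abs _ _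
        _ ≤ ∑ j, R j := Finset.sum_le_sum fun j _ => hy.2 j
    obtain ⟨hs1, hs2⟩ := abs_le.mp hsum
    have hexp1 : Real.exp (-S) ≤ Real.exp (∑ j, φ j (Function.update y i xi j)) :=
      Real.exp_le_exp.2 hs1
    have hexp2 : Real.exp (∑ j, φ j (Function.update y i xi j)) ≤ Real.exp S :=
      Real.exp_le_exp.2 hs2
    have hK1 := hy.1.1
    have hK2 := hy.1.2
    constructor
    · exact mul_le_mul hK1 hexp1 (Real.exp_pos _).le (le_trans ha.le hK1)
    · exact mul_le_mul hK2 hexp2 (Real.exp_pos _).le (le_trans ha.le hab)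
  have hgmeas : Measurable g := by
    have h1 : Measurable (gammaFn K φ) := by
      apply hK.mul
      exact Real.measurable_exp.comp
        (Finset.measurable_sum _ fun j _ => (hφ j).1.comp (measurable_pi_apply j))
    exact h1.comp measurable_update_left
  have hgint : Integrable g (Measure.pi m) := by
    refine Integrable.mono' (integrable_const B) hgmeas.aestronglyMeasurable ?_
    filter_upwards [hgb] with y hy
    rw [Real.norm_eq_abs, abs_of_nonneg (le_trans hApos.le hy.1)]
    exact hy.2
  -- denominator lower bound
  have hD : A ≤ ∫ y, g y ∂Measure.pi m := by
    have := integral_mono_ae (integrable_const A) hgint (hgb.mono fun y hy => hy.1)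
    simpa using this
  have hDpos : 0 < ∫ y, g y ∂Measure.pi m := lt_of_lt_of_le hApos hD
  -- integrability of the coordinate functions and of F
  have hcoord : ∀ j, Integrable (fun y : ∀ k, X k => h j (y j)) (Measure.pi m) := by
    intro j
    have hint : Integrable (h j) (m j) := (hh2 j).integrable one_le_two
    have : Integrable (h j) (Measure.map (fun y : ∀ k, X k => y j) (Measure.pi m)) := by
      rwa [(measurePreserving_eval' m j).map_eq]
    exact (integrable_map_measure ((hhm j).aestronglyMeasurable.mono_ac
      (Measure.absolutelyContinuous_of_eq (measurePreserving_eval' m j).map_eq))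
      (measurable_pi_apply j).aemeasurable).1 this
  have hFint : Integrable F (Measure.pi m) :=
    integrable_finset_sum _ fun j _ => hcoord j
  -- rewrite the numerator
  have hnum_eq : (∫ y, gammaFn K φ (Function.update y i xi) *
      ∑ j ∈ Finset.univ.erase i, h j (Function.update y i xi j) ∂Measure.pi m)
      = ∫ y, g y * F y ∂Measure.pi m := by
    have hpt : ∀ y : ∀ j, X j, (∑ j ∈ Finset.univ.erase i, h j (Function.update y i xi j))
        = F y := fun y => Finset.sum_congr rfl fun j hj => by
      rw [Function.update_of_ne (Finset.ne_of_mem_erase hj)]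
    refine integral_congr_ae (Filter.Eventually.of_forall fun y => ?_)
    show gammaFn K φ (Function.update y i xi) *
        (∑ j ∈ Finset.univ.erase i, h j (Function.update y i xi j)) = g y * F y
    rw [hpt y]
  have hgFint : Integrable (fun y => g y * F y) (Measure.pi m) := by
    refine Integrable.bdd_mul (c := B) hFint hgmeas.aestronglyMeasurable ?_
    filter_upwards [hgb] with y hy
    rw [Real.norm_eq_abs, abs_of_nonneg (le_trans hApos.le hy.1)]
    exact hy.2
  -- numerator upper bound
  have hint_eval : ∀ j, (∫ y, |h j (y j)| ∂Measure.pi m) = ∫ z, |h j z| ∂m j := by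
    intro j
    conv_rhs => rw [← (measurePreserving_eval' m j).map_eq]
    exact (integral_map (measurable_pi_apply j).aemeasurable
      ((hhm j).abs.aestronglyMeasurable)).symm
  have hnormF : (∫ y, |F y| ∂Measure.pi m)
      ≤ ∑ j ∈ Finset.univ.erase i, ∫ z, |h j z| ∂m j := by
    have h1 : (∫ y, |F y| ∂Measure.pi m)
        ≤ ∫ y, ∑ j ∈ Finset.univ.erase i, |h j (y j)| ∂Measure.pi m := by
      refine integral_mono hFint.abs
        (integrable_finset_sum _ fun j _ => (hcoord j).abs) fun y => ?_
      exact Finset.abs_sum_le_sum_abs _ _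
    rw [integral_finset_sum _ fun j _ => (hcoord j).abs] at h1
    calc (∫ y, |F y| ∂Measure.pi m)
        ≤ ∑ j ∈ Finset.univ.erase i, ∫ y, |h j (y j)| ∂Measure.pi m := h1
      _ = ∑ j ∈ Finset.univ.erase i, ∫ z, |h j z| ∂m j :=
          Finset.sum_congr rfl fun j _ => hint_eval j
  have habs_num : |∫ y, g y * F y ∂Measure.pi m|
      ≤ B * ∑ j ∈ Finset.univ.erase i, Real.sqrt (∫ x, h j x ^ 2 ∂m j) := by
    have h1 : |∫ y, g y * F y ∂Measure.pi m| ≤ ∫ y, |g y * F y| ∂Measure.pi m := by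
      have := norm_integral_le_integral_norm (μ := Measure.pi m) (fun y => g y * F y)
      simpa only [Real.norm_eq_abs] using this
    have h2 : (∫ y, |g y * F y| ∂Measure.pi m) ≤ ∫ y, B * |F y| ∂Measure.pi m := by
      refine integral_mono_ae hgFint.abs (hFint.abs.const_mul B) ?_
      filter_upwards [hgb] with y hy
      rw [abs_mul]
      have hgB : |g y| ≤ B := by
        rw [abs_of_nonneg (le_trans hApos.le hy.1)]; exact hy.2
      exact mul_le_mul_of_nonneg_right hgB (abs_nonneg _)
    have h3 : (∫ y, B * |F y| ∂Measure.pi m) = B * ∫ y, |F y| ∂Measure.pi m :=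
      integral_const_mul B _
    have h4 : (∑ j ∈ Finset.univ.erase i, ∫ z, |h j z| ∂m j)
        ≤ ∑ j ∈ Finset.univ.erase i, Real.sqrt (∫ x, h j x ^ 2 ∂m j) :=
      Finset.sum_le_sum fun j _ => integral_abs_le_sqrt_integral_sq (m j) (h j) (hh2 j)
    calc |∫ y, g y * F y ∂Measure.pi m| ≤ ∫ y, |g y * F y| ∂Measure.pi m := h1
      _ ≤ ∫ y, B * |F y| ∂Measure.pi m := h2
      _ = B * ∫ y, |F y| ∂Measure.pi m := h3
      _ ≤ B * ∑ j ∈ Finset.univ.erase i, ∫ z, |h j z| ∂m j :=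
          mul_le_mul_of_nonneg_left hnormF hBpos.le
      _ ≤ B * ∑ j ∈ Finset.univ.erase i, Real.sqrt (∫ x, h j x ^ 2 ∂m j) :=
          mul_le_mul_of_nonneg_left h4 hBpos.le
  -- put everything together
  have hschrL : schrL m K φ h i xi
      = (∫ y, g y * F y ∂Measure.pi m) / (∫ y, g y ∂Measure.pi m) := by
    rw [schrL, hnum_eq]
  rw [hschrL, abs_div, abs_of_pos hDpos]
  set Sig : ℝ := ∑ j ∈ Finset.univ.erase i, Real.sqrt (∫ x, h j x ^ 2 ∂m j) with hSig
  have hSignn : 0 ≤ Sig := Finset.sum_nonneg fun j _ => Real.sqrt_nonneg _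
  calc |∫ y, g y * F y ∂Measure.pi m| / (∫ y, g y ∂Measure.pi m)
      ≤ (B * Sig) / (∫ y, g y ∂Measure.pi m) := by gcongr
    _ ≤ (B * Sig) / A := by gcongr
    _ = (B / A) * Sig := by ring
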